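/- Let n ≥ 1 and let C be a real number. Then there exists a finite set Φ of automorphisms of F = FreeGroup (Fin n) such that every automorphism φ of F satisfying ‖φ g‖ ≤ C · ‖g‖ for all g ≠ 1 can be written as φ = ψ ∘ c_x for some ψ ∈ Φ and x ∈ F, where c_x denotes the inner automorphism g ↦ x * g * x⁻¹. In other words, for any constant C there are only finitely many outer automorphisms φ of F_n with ‖φ‖_B ≤ C. -/

import Mathlib

noncomputable def cyclen {n : ℕ} (g : FreeGroup (Fin n)) : ℕ :=
  sInf { l : ℕ | ∃ x : FreeGroup (Fin n), l = (x * g * x⁻¹).norm }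

namespace FGAux

open FreeGroup List

variable {α : Type*} [DecidableEq α]

/-- adjacent-pair admissibility for reduced words -/
def Ok (p q : α × Bool) : Prop := q ≠ (p.1, !p.2)

lemma chain'_reduce (L : List (α × Bool)) : List.Chain' Ok (reduce L) := by
  induction L with
  | nil => simp [FreeGroup.reduce, List.Chain']
  | cons x L ih =>
    rw [FreeGroup.reduce.cons]
    rcases h : reduce L with _ | ⟨hd, tl⟩
    · simp [List.Chain']
    · rw [h] at ih
      by_cases hc : x.1 = hd.1 ∧ x.2 = !hd.2
      · simp only [if_pos hc]
        exact ih.tail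
      · simp only [if_neg hc]
        refine List.IsChain.cons_cons ?_ ih
        intro he
        apply hc
        subst he
        exact ⟨rfl, by simp⟩

lemma reduce_eq_self_of_chain' {L : List (α × Bool)} (h : List.Chain' Ok L) :
    reduce L = L := by
  induction L with
  | nil => rfl
  | cons x L ih =>
    rw [FreeGroup.reduce.cons, ih h.tail]
    rcases L with _ | ⟨hd, tl⟩
    · rfl
    · have hok : Ok x hd := List.isChain_cons_cons.mp h |>.1
      have : ¬ (x.1 = hd.1 ∧ x.2 = !hd.2) := by
        rintro ⟨h1, h2⟩
        exact hok (Prod.ext h1.symm (by simp [h2]))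
      simp [this]

lemma chain'_toWord (g : FreeGroup α) : List.Chain' Ok g.toWord := by
  rw [← FreeGroup.reduce_toWord]
  exact chain'_reduce _

lemma toWord_mk_of_chain' {L : List (α × Bool)} (h : List.Chain' Ok L) :
    (FreeGroup.mk L).toWord = L := by
  rw [FreeGroup.toWord_mk, reduce_eq_self_of_chain' h]

lemma norm_mk_of_chain' {L : List (α × Bool)} (h : List.Chain' Ok L) :
    (FreeGroup.mk L).norm = L.length := by
  rw [FreeGroup.norm, toWord_mk_of_chain' h]

end FGAux

namespace FGAux2

open FreeGroup List FGAux

variable {n : ℕ}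

local notation "F" => FreeGroup (Fin n)

lemma cyclen_le (g x : F) : cyclen g ≤ (x * g * x⁻¹).norm :=
  Nat.sInf_le ⟨x, rfl⟩

lemma cyclen_le_norm (g : F) : cyclen g ≤ g.norm := by
  simpa using cyclen_le g 1

lemma cyclen_exists (g : F) : ∃ x : F, cyclen g = (x * g * x⁻¹).norm :=
  Nat.sInf_mem (⟨g.norm, 1, by simp⟩ : { l : ℕ | ∃ x : F, l = (x * g * x⁻¹).norm }.Nonempty)

lemma cyclen_conj (z g : F) : cyclen (z * g * z⁻¹) = cyclen g := by
  unfold cyclen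
  congr 1
  ext l
  constructor
  · rintro ⟨x, rfl⟩
    exact ⟨x * z, by group⟩
  · rintro ⟨x, rfl⟩
    exact ⟨x * z⁻¹, by group⟩

lemma cyclen_eq_of_isConj {g h : F} (hc : IsConj g h) : cyclen g = cyclen h := by
  rw [isConj_iff] at hc
  obtain ⟨c, rfl⟩ := hc
  rw [cyclen_conj]

lemma norm_pow_le (g : F) (m : ℕ) : (g ^ m).norm ≤ m * g.norm := by
  induction m with
  | zero => simp
  | succ m ih =>
    rw [pow_succ]
    calc (g ^ m * g).norm ≤ (g ^ m).norm + g.norm := FreeGroup.norm_mul_le _ _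
    _ ≤ m * g.norm + g.norm := by omega
    _ = (m + 1) * g.norm := by ring

/-- cyclic admissibility of the wrap-around pair -/
def WrapOk (L : List (Fin n × Bool)) : Prop :=
  ∀ x ∈ L.getLast?, ∀ y ∈ L.head?, Ok x y

lemma chain'_flatten_replicate {L : List (Fin n × Bool)} (hL : List.Chain' Ok L)
    (hw : WrapOk L) (m : ℕ) : List.Chain' Ok (List.flatten (List.replicate m L)) := by
  induction m with
  | zero => simp [List.Chain']
  | succ m ih =>
    rw [List.replicate_succ, List.flatten_cons]
    simp only [List.Chain']; rw [List.isChain_append]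
    refine ⟨hL, ih, ?_⟩
    intro x hx y hy
    apply hw x hx
    rcases m with _ | m
    · simp at hy
    · rcases L with _ | ⟨a, L'⟩
      · simp at hy
      · rw [List.replicate_succ, List.flatten_cons] at hy
        simpa using hy

lemma norm_pow_cyclic {L : List (Fin n × Bool)} (hL : List.Chain' Ok L)
    (hw : WrapOk L) (m : ℕ) : ((FreeGroup.mk L) ^ m).norm = m * L.length := by
  rw [FreeGroup.pow_mk, norm_mk_of_chain' (chain'_flatten_replicate hL hw m)]
  simp [List.length_flatten, Function.comp_def, mul_comm]

lemma cyclen_mk {L : List (Fin n × Bool)} (hL : List.Chain' Ok L)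
    (hw : WrapOk L) : cyclen (FreeGroup.mk L) = L.length := by
  refine le_antisymm (by rw [← norm_mk_of_chain' hL]; exact cyclen_le_norm _) ?_
  by_contra hlt
  push_neg at hlt
  obtain ⟨x, hx⟩ := cyclen_exists (FreeGroup.mk L)
  have key : ∀ m : ℕ, m * L.length ≤ 2 * x.norm + m * (x * FreeGroup.mk L * x⁻¹).norm := by
    intro m
    have hconj : (FreeGroup.mk L) ^ m = x⁻¹ * ((x * FreeGroup.mk L * x⁻¹) ^ m * x) := by
      rw [conj_pow]; group
    have h1 := FreeGroup.norm_mul_le x⁻¹ ((x * FreeGroup.mk L * x⁻¹) ^ m * x)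
    have h2 := FreeGroup.norm_mul_le ((x * FreeGroup.mk L * x⁻¹) ^ m) x
    have h3 := norm_pow_le (x * FreeGroup.mk L * x⁻¹) m
    have h4 : (x⁻¹ : FreeGroup (Fin n)).norm = x.norm := FreeGroup.norm_inv_eq
    have h5 : ((FreeGroup.mk L) ^ m).norm = m * L.length := norm_pow_cyclic hL hw m
    rw [hconj] at h5
    omega
  have hKlt : (x * FreeGroup.mk L * x⁻¹).norm < L.length := hx ▸ hlt
  set m := 2 * x.norm + 1 with hm
  have h2 : m * ((x * FreeGroup.mk L * x⁻¹).norm + 1) ≤ m * L.length :=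
    Nat.mul_le_mul_left m (by omega)
  have h3 : m * ((x * FreeGroup.mk L * x⁻¹).norm + 1)
      = m * (x * FreeGroup.mk L * x⁻¹).norm + m := by ring
  have h4 := key m
  omega

lemma cyclen_of (i : Fin n) : cyclen (FreeGroup.of i) = 1 := by
  have : FreeGroup.of i = FreeGroup.mk [(i, true)] := rfl
  rw [this, cyclen_mk (by simp [List.Chain']) ?_]
  · rfl
  · intro x hx y hy
    simp at hx hy
    subst hx; subst hy
    exact fun h => by simp [Ok] at h

lemma cyclen_of_mul_of (i j : Fin n) : cyclen (FreeGroup.of i * FreeGroup.of j) = 2 := by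
  have : FreeGroup.of i * FreeGroup.of j = FreeGroup.mk [(i, true), (j, true)] := by
    rw [show (FreeGroup.of i : FreeGroup (Fin n)) = FreeGroup.mk [(i, true)] from rfl,
      show (FreeGroup.of j : FreeGroup (Fin n)) = FreeGroup.mk [(j, true)] from rfl,
      FreeGroup.mul_mk]
    rfl
  rw [this, cyclen_mk ?_ ?_]
  · rfl
  · refine List.isChain_cons_cons.mpr ⟨?_, by simp⟩
    intro h
    simp [Prod.ext_iff] at h
  · intro x hx y hy
    simp at hx hy
    subst hx; subst hy
    intro h
    simp [Prod.ext_iff] at h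

end FGAux2

namespace FGAux3

open FreeGroup List FGAux FGAux2

variable {n : ℕ}

local notation "F" => FreeGroup (Fin n)

lemma mk_cancel (L₁ L₂ : List (Fin n × Bool)) (x : Fin n) (b : Bool) :
    FreeGroup.mk (L₁ ++ (x, b) :: (x, !b) :: L₂) = FreeGroup.mk (L₁ ++ L₂) :=
  Quot.sound Red.Step.not

lemma invRev_cons (p : Fin n × Bool) (L : List (Fin n × Bool)) :
    invRev (p :: L) = invRev L ++ [(p.1, !p.2)] := by
  simp [invRev]

lemma invRev_concat (p : Fin n × Bool) (L : List (Fin n × Bool)) :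
    invRev (L ++ [p]) = (p.1, !p.2) :: invRev L := by
  simp [invRev]

/-- the cyclically reduced word for `a u b u⁻¹` in the non-cancelling case -/
lemma main_case_cyclen (i₁ i₂ j j' : Fin n) (c c' : Bool)
    (W T T' : List (Fin n × Bool))
    (hchainW : List.Chain' Ok W) (hchainWinv : List.Chain' Ok (invRev W))
    (hW1 : W = (j, c) :: T) (hW2 : W = T' ++ [(j', c')])
    (hj : j ≠ i₁) (hj' : j' ≠ i₂) :
    cyclen (FreeGroup.mk ((i₁, true) :: (W ++ (i₂, true) :: invRev W)))
      = 2 + 2 * W.length := by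
  have hinvhead : invRev W = (j', !c') :: invRev T' := by
    rw [hW2, invRev_concat]
  have hinvlast : invRev W = invRev T ++ [(j, !c)] := by
    rw [hW1, invRev_cons]
  have hchainV : List.Chain' Ok ((i₁, true) :: (W ++ (i₂, true) :: invRev W)) := by
    refine List.isChain_cons.mpr ⟨?_, ?_⟩
    · intro y hy
      rw [hW1] at hy
      simp at hy
      subst hy
      intro hcon
      exact hj (by simpa using congrArg Prod.fst hcon)
    · refine List.isChain_append.mpr ⟨hchainW, ?_, ?_⟩
      · refine List.isChain_cons.mpr ⟨?_, hchainWinv⟩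
        intro y hy
        rw [hinvhead] at hy
        simp at hy
        subst hy
        intro hcon
        exact hj' (by simpa using congrArg Prod.fst hcon)
      · intro x hx y hy
        rw [hW2] at hx
        simp at hx hy
        subst hx; subst hy
        intro hcon
        have h2 := congrArg Prod.fst hcon
        simp at h2
        exact hj' h2.symm
  have hwrapV : WrapOk ((i₁, true) :: (W ++ (i₂, true) :: invRev W)) := by
    intro x hx y hy
    simp at hy
    have e1 : (i₁, true) :: (W ++ (i₂, true) :: invRev W)
        = ((i₁, true) :: (W ++ [(i₂, true)]) ++ invRev T) ++ [(j, !c)] := by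
      rw [hinvlast]; simp
    rw [e1, List.getLast?_concat] at hx
    simp at hx
    subst hx; subst hy
    intro hcon
    apply hj
    have h1 := congrArg Prod.fst hcon
    simpa using h1.symm
  rw [cyclen_mk hchainV hwrapV]
  simp [invRev_length]
  ring

theorem word_lemma (i₁ i₂ : Fin n) (hne : i₁ ≠ i₂) :
    ∀ N : ℕ, ∀ u : F, u.norm ≤ N →
      cyclen (FreeGroup.of i₁ * u * FreeGroup.of i₂ * u⁻¹) = 2 →
      ∃ p q : ℤ, u = FreeGroup.of i₁ ^ p * FreeGroup.of i₂ ^ q := by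
  intro N
  induction N with
  | zero =>
    intro u hu _
    have : u = 1 := FreeGroup.norm_eq_zero.mp (Nat.le_zero.mp hu)
    exact ⟨0, 0, by simp [this]⟩
  | succ N ih =>
    intro u hn h
    by_cases hu : u = 1
    · exact ⟨0, 0, by simp [hu]⟩
    have hW : u.toWord ≠ [] := fun hh => hu (FreeGroup.toWord_eq_nil_iff.mp hh)
    obtain ⟨⟨j, c⟩, T, hW1⟩ : ∃ p T, u.toWord = p :: T := by
      rcases hWw : u.toWord with _ | ⟨p, T⟩
      · exact absurd hWw hW
      · exact ⟨p, T, rfl⟩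
    obtain ⟨T', ⟨j', c'⟩, hW2⟩ : ∃ T' p, u.toWord = T' ++ [p] := by
      rcases List.eq_nil_or_concat u.toWord with hh | ⟨T', p, hh⟩
      · exact absurd hh hW
      · exact ⟨T', p, by simpa using hh⟩
    have hnorm : u.norm = u.toWord.length := rfl
    have humk : u = FreeGroup.mk u.toWord := (FreeGroup.mk_toWord).symm
    by_cases hj : j = i₁
    · rw [hj] at hW1
      clear hj
      -- u starts with (i₁, c) : peel it off
      cases c
      · -- u starts with i₁⁻¹ ; u' = of i₁ * u
        set u' : F := FreeGroup.of i₁ * u with hu'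
        have hmk : u' = FreeGroup.mk T := by
          rw [hu', humk, hW1]
          rw [show (FreeGroup.of i₁ : F) = FreeGroup.mk [(i₁, true)] from rfl,
            FreeGroup.mul_mk]
          have := mk_cancel ([] : List (Fin n × Bool)) T i₁ true
          simpa using this
        have hT : List.Chain' Ok T := by
          have := chain'_toWord u
          rw [hW1] at this
          exact this.tail
        have hn' : u'.norm ≤ N := by
          have : u'.norm = T.length := by rw [hmk]; exact norm_mk_of_chain' hT
          rw [hnorm, hW1] at hn
          simp at hn
          omega
        have hcy : cyclen (FreeGroup.of i₁ * u' * FreeGroup.of i₂ * u'⁻¹) = 2 := by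
          have heq : FreeGroup.of i₁ * u' * FreeGroup.of i₂ * u'⁻¹ =
              FreeGroup.of i₁ * (FreeGroup.of i₁ * u * FreeGroup.of i₂ * u⁻¹) *
                (FreeGroup.of i₁)⁻¹ := by
            rw [hu']; group
          rw [heq, cyclen_conj, h]
        obtain ⟨p, q, hpq⟩ := ih u' hn' hcy
        refine ⟨p - 1, q, ?_⟩
        have huu : u = (FreeGroup.of i₁)⁻¹ * u' := by rw [hu']; group
        rw [huu, hpq]
        group
      · -- u starts with i₁ ; u' = (of i₁)⁻¹ * u
        set u' : F := (FreeGroup.of i₁)⁻¹ * u with hu'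
        have hmk : u' = FreeGroup.mk T := by
          rw [hu', humk, hW1]
          rw [show ((FreeGroup.of i₁)⁻¹ : F) = FreeGroup.mk [(i₁, false)] from rfl,
            FreeGroup.mul_mk]
          have := mk_cancel ([] : List (Fin n × Bool)) T i₁ false
          simpa using this
        have hT : List.Chain' Ok T := by
          have := chain'_toWord u
          rw [hW1] at this
          exact this.tail
        have hn' : u'.norm ≤ N := by
          have : u'.norm = T.length := by rw [hmk]; exact norm_mk_of_chain' hT
          rw [hnorm, hW1] at hn
          simp at hn
          omega
        have hcy : cyclen (FreeGroup.of i₁ * u' * FreeGroup.of i₂ * u'⁻¹) = 2 := by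
          have heq : FreeGroup.of i₁ * u' * FreeGroup.of i₂ * u'⁻¹ =
              (FreeGroup.of i₁)⁻¹ * (FreeGroup.of i₁ * u * FreeGroup.of i₂ * u⁻¹) *
                ((FreeGroup.of i₁)⁻¹)⁻¹ := by
            rw [hu']; group
          rw [heq, cyclen_conj, h]
        obtain ⟨p, q, hpq⟩ := ih u' hn' hcy
        refine ⟨p + 1, q, ?_⟩
        have huu : u = FreeGroup.of i₁ * u' := by rw [hu']; group
        rw [huu, hpq]
        group
    · by_cases hj' : j' = i₂
      · rw [hj'] at hW2
        clear hj'
        -- u ends with (i₂, c') : peel it off on the right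
        set u' : F := u * FreeGroup.mk [(i₂, !c')] with hu'
        have hmk : u' = FreeGroup.mk T' := by
          rw [hu', humk, hW2, FreeGroup.mul_mk]
          have := mk_cancel T' ([] : List (Fin n × Bool)) i₂ c'
          simpa using this
        have hT : List.Chain' Ok T' := by
          have := chain'_toWord u
          rw [hW2] at this
          exact (List.isChain_append.mp this).1
        have hn' : u'.norm ≤ N := by
          have : u'.norm = T'.length := by rw [hmk]; exact norm_mk_of_chain' hT
          rw [hnorm, hW2] at hn
          simp at hn
          omega
        have hback : u = u' * FreeGroup.mk [(i₂, c')] := by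
          rw [hmk, FreeGroup.mul_mk, ← hW2, ← humk]
        have hbt : FreeGroup.mk [(i₂, true)] = (FreeGroup.of i₂ : F) := rfl
        have hbf : FreeGroup.mk [(i₂, false)] = ((FreeGroup.of i₂)⁻¹ : F) := rfl
        have hcy : cyclen (FreeGroup.of i₁ * u' * FreeGroup.of i₂ * u'⁻¹) = 2 := by
          have heq : FreeGroup.of i₁ * u' * FreeGroup.of i₂ * u'⁻¹ =
              FreeGroup.of i₁ * u * FreeGroup.of i₂ * u⁻¹ := by
            rw [hback]
            cases c'
            · rw [hbf]; group
            · rw [hbt]; group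
          rw [heq, h]
        obtain ⟨p, q, hpq⟩ := ih u' hn' hcy
        cases c'
        · exact ⟨p, q - 1, by rw [hback, hpq, hbf]; group⟩
        · exact ⟨p, q + 1, by rw [hback, hpq, hbt]; group⟩
      · -- main case : the word is visibly cyclically reduced
        exfalso
        have hchainWinv : List.Chain' Ok (invRev u.toWord) := by
          have := chain'_toWord u⁻¹
          rwa [FreeGroup.toWord_inv] at this
        have hkey := main_case_cyclen i₁ i₂ j j' c c' u.toWord T T'
          (chain'_toWord u) hchainWinv hW1 hW2 hj hj'
        have hmkV : FreeGroup.mk ((i₁, true) :: (u.toWord ++ (i₂, true) :: invRev u.toWord))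
            = FreeGroup.of i₁ * u * FreeGroup.of i₂ * u⁻¹ := by
          have step : FreeGroup.mk [(i₁, true)] * FreeGroup.mk u.toWord *
              FreeGroup.mk [(i₂, true)] * FreeGroup.mk (invRev u.toWord)
              = FreeGroup.mk ((i₁, true) :: (u.toWord ++ (i₂, true) :: invRev u.toWord)) := by
            rw [FreeGroup.mul_mk, FreeGroup.mul_mk, FreeGroup.mul_mk]
            congr 1
            simp
          rw [← FreeGroup.inv_mk, FreeGroup.mk_toWord] at step
          exact step.symm
        rw [hmkV, h] at hkey
        have hlen : u.toWord.length = 0 := by omega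
        exact hW (List.eq_nil_of_length_eq_zero hlen)

end FGAux3

namespace FGAux4

open FreeGroup List FGAux FGAux2 FGAux3

variable {n : ℕ}

local notation "F" => FreeGroup (Fin n)

lemma chain'_replicate (m : ℕ) (x : Fin n × Bool) (h : Ok x x) :
    List.Chain' Ok (List.replicate m x) := by
  induction m with
  | zero => simp [List.Chain']
  | succ m ih =>
    rw [List.replicate_succ]
    exact List.isChain_cons.mpr ⟨fun y hy => by
      rcases m with _ | m
      · simp at hy
      · rw [List.replicate_succ] at hy
        simp at hy
        subst hy
        exact h, ih⟩

lemma ok_self (x : Fin n × Bool) : Ok x x := by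
  intro hcon
  have := congrArg Prod.snd hcon
  simp at this

lemma mk_replicate_true (i : Fin n) (m : ℕ) :
    FreeGroup.mk (List.replicate m (i, true)) = FreeGroup.of i ^ m := by
  have := FreeGroup.toWord_of_pow i m (α := Fin n)
  rw [← this, FreeGroup.mk_toWord]

lemma mk_replicate_false (i : Fin n) (m : ℕ) :
    FreeGroup.mk (List.replicate m (i, false)) = (FreeGroup.of i ^ m)⁻¹ := by
  rw [← mk_replicate_true, FreeGroup.inv_mk]
  congr 1
  simp [invRev]

lemma delta_key (i₀ j k : Fin n) (hj : j ≠ i₀) (hk : k ≠ i₀) (s : Bool) (mm : ℕ) :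
    cyclen (FreeGroup.mk ((j, true) :: (List.replicate (mm + 1) (i₀, s) ++
      (k, true) :: List.replicate (mm + 1) (i₀, !s)))) = 2 + 2 * (mm + 1) := by
  set V : List (Fin n × Bool) := (j, true) :: (List.replicate (mm + 1) (i₀, s) ++
      (k, true) :: List.replicate (mm + 1) (i₀, !s)) with hV
  have hchain : List.Chain' Ok V := by
    rw [hV]
    refine List.isChain_cons.mpr ⟨?_, ?_⟩
    · intro y hy
      rw [List.replicate_succ] at hy
      simp at hy
      subst hy
      intro hcon
      have h2 := congrArg Prod.fst hcon
      simp at h2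
      exact hj h2.symm
    · refine List.isChain_append.mpr ⟨chain'_replicate _ _ (ok_self _), ?_, ?_⟩
      · refine List.isChain_cons.mpr ⟨?_, chain'_replicate _ _ (ok_self _)⟩
        intro y hy
        rw [List.replicate_succ] at hy
        simp at hy
        subst hy
        intro hcon
        have h2 := congrArg Prod.fst hcon
        simp at h2
        exact hk h2.symm
      · intro x hx y hy
        simp at hy
        subst hy
        have e : (List.replicate (mm + 1) (i₀, s)).getLast? = some (i₀, s) := by
          rw [List.replicate_succ']
          exact List.getLast?_concat
        rw [e] at hx
        simp at hx
        subst hx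
        intro hcon
        have h2 := congrArg Prod.fst hcon
        simp at h2
        exact hk h2
  have hwrap : WrapOk V := by
    intro x hx y hy
    rw [hV] at hx hy
    simp at hy
    have e1 : V = ((j, true) :: (List.replicate (mm + 1) (i₀, s) ++
        (k, true) :: List.replicate mm (i₀, !s))) ++ [(i₀, !s)] := by
      rw [hV]
      rw [show List.replicate (mm + 1) (i₀, !s) = List.replicate mm (i₀, !s) ++ [(i₀, !s)]
        from List.replicate_succ']
      simp
    rw [← hV, e1, List.getLast?_concat] at hx
    simp at hx
    subst hx; subst hy
    intro hcon
    have h2 := congrArg Prod.fst hcon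
    simp at h2
    exact hj h2
  rw [cyclen_mk hchain hwrap, hV]
  simp
  ring

lemma delta_lemma (i₀ j k : Fin n) (hj : j ≠ i₀) (hk : k ≠ i₀) (δ : ℤ)
    (h : cyclen (FreeGroup.of j * FreeGroup.of i₀ ^ δ * FreeGroup.of k *
      FreeGroup.of i₀ ^ (-δ)) = 2) : δ = 0 := by
  by_contra hδ
  obtain ⟨mm, hmm⟩ : ∃ mm : ℕ, δ.natAbs = mm + 1 := by
    have := Int.natAbs_pos.mpr hδ
    exact ⟨δ.natAbs - 1, by omega⟩
  have habs := Int.natAbs_eq δ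
  rw [hmm] at habs
  have key : ∀ s : Bool,
      FreeGroup.of j * FreeGroup.of i₀ ^ δ * FreeGroup.of k * FreeGroup.of i₀ ^ (-δ) =
        FreeGroup.mk ((j, true) :: (List.replicate (mm + 1) (i₀, s) ++
          (k, true) :: List.replicate (mm + 1) (i₀, !s))) →
      False := by
    intro s heq
    rw [heq, delta_key i₀ j k hj hk s mm] at h
    omega
  rcases habs with hpos | hneg
  · refine key true ?_
    rw [hpos]
    rw [show ((mm + 1 : ℕ) : ℤ) = ((mm + 1 : ℕ) : ℤ) from rfl, zpow_natCast,
      show (-((mm + 1 : ℕ) : ℤ)) = -((mm + 1 : ℕ) : ℤ) from rfl, zpow_neg, zpow_natCast]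
    rw [← mk_replicate_true i₀ (mm + 1)]
    rw [show (FreeGroup.of j : F) = FreeGroup.mk [(j, true)] from rfl,
      show (FreeGroup.of k : F) = FreeGroup.mk [(k, true)] from rfl,
      FreeGroup.inv_mk,
      FreeGroup.mul_mk, FreeGroup.mul_mk, FreeGroup.mul_mk]
    congr 1
    simp [invRev]
  · refine key false ?_
    rw [hneg, zpow_neg, zpow_natCast, neg_neg, zpow_natCast]
    rw [← mk_replicate_true i₀ (mm + 1)]
    rw [show (FreeGroup.of j : F) = FreeGroup.mk [(j, true)] from rfl,
      show (FreeGroup.of k : F) = FreeGroup.mk [(k, true)] from rfl,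
      FreeGroup.inv_mk,
      FreeGroup.mul_mk, FreeGroup.mul_mk, FreeGroup.mul_mk]
    congr 1
    simp [invRev]

end FGAux4

namespace FGAux5

open FreeGroup FGAux FGAux2 FGAux3 FGAux4

variable {n : ℕ}

local notation "F" => FreeGroup (Fin n)

theorem inner_of_classes (hn : 1 ≤ n) (θ : FreeGroup (Fin n) ≃* FreeGroup (Fin n))
    (h1 : ∀ i : Fin n, IsConj (FreeGroup.of i) (θ (FreeGroup.of i)))
    (h2 : ∀ i j : Fin n, IsConj (FreeGroup.of i * FreeGroup.of j)
      (θ (FreeGroup.of i * FreeGroup.of j))) :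
    ∃ z : F, ∀ g : F, θ g = z * g * z⁻¹ := by
  have hx : ∀ i : Fin n, ∃ c : F, c * FreeGroup.of i * c⁻¹ = θ (FreeGroup.of i) := by
    intro i
    exact isConj_iff.mp (h1 i)
  choose x hxeq using hx
  set i₀ : Fin n := ⟨0, hn⟩ with hi₀
  set a : F := FreeGroup.of i₀ with ha
  set X : F := x i₀ with hX
  -- step 1: each generator image has the form X * a^p * of j * a^(-p) * X⁻¹
  have hP : ∀ j : Fin n, ∃ p : ℤ,
      θ (FreeGroup.of j) = X * (a ^ p * FreeGroup.of j * a ^ (-p)) * X⁻¹ := by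
    intro j
    by_cases hji : j = i₀
    · exact ⟨0, by rw [hji]; simpa using (hxeq i₀).symm⟩
    · set y : F := X⁻¹ * x j with hy
      have hconj : cyclen (a * y * FreeGroup.of j * y⁻¹) = 2 := by
        have e1 : θ (a * FreeGroup.of j) =
            X * (a * y * FreeGroup.of j * y⁻¹) * X⁻¹ := by
          rw [_root_.map_mul, ← hxeq i₀, ← hxeq j, hy, hX, ha]
          group
        have e2 := cyclen_eq_of_isConj (h2 i₀ j)
        rw [e1, cyclen_conj] at e2
        rw [← e2]; exact cyclen_of_mul_of i₀ j
      obtain ⟨p, q, hpq⟩ := word_lemma i₀ j (fun hcon => hji hcon.symm) y.norm y le_rfl hconj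
      refine ⟨p, ?_⟩
      have e3 : θ (FreeGroup.of j) = X * (y * FreeGroup.of j * y⁻¹) * X⁻¹ := by
        rw [← hxeq j, hy, hX]
        group
      rw [e3, hpq, ha]
      group
  choose pf hpf using hP
  -- step 2: a single exponent works for all generators
  have hsingle : ∃ z : F, ∀ j : Fin n, θ (FreeGroup.of j) = z * FreeGroup.of j * z⁻¹ := by
    by_cases hex : ∃ j : Fin n, j ≠ i₀
    · obtain ⟨j₀, hj₀⟩ := hex
      refine ⟨X * a ^ (pf j₀), ?_⟩
      have hpeq : ∀ j : Fin n, j ≠ i₀ → pf j = pf j₀ := by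
        intro j hj
        by_cases hjj : j = j₀
        · rw [hjj]
        · have e1 : θ (FreeGroup.of j₀ * FreeGroup.of j) =
              (X * a ^ (pf j₀)) * (FreeGroup.of j₀ * a ^ (pf j - pf j₀) * FreeGroup.of j *
                a ^ (-(pf j - pf j₀))) * (X * a ^ (pf j₀))⁻¹ := by
            rw [_root_.map_mul, hpf j₀, hpf j]
            group
          have e2 := cyclen_eq_of_isConj (h2 j₀ j)
          rw [e1, cyclen_conj] at e2
          rw [cyclen_of_mul_of] at e2
          have := delta_lemma i₀ j₀ j hj₀ hj (pf j - pf j₀) e2.symm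
          omega
      intro j
      by_cases hji : j = i₀
      · rw [hji]
        have := hxeq i₀
        rw [← ha, ← hX] at this
        rw [← ha, ← this]
        group
      · rw [hpf j, hpeq j hji]
        group
    · push_neg at hex
      refine ⟨X, ?_⟩
      intro j
      rw [hex j]
      have := hxeq i₀
      rw [← ha, ← hX] at this
      rw [← this]
  -- step 3: propagate to all elements
  obtain ⟨z, hz⟩ := hsingle
  refine ⟨z, ?_⟩
  intro g
  induction g using FreeGroup.induction_on with
  | C1 => simp
  | of i => exact hz i
  | inv_of i hi =>
    rw [_root_.map_inv, hi]
    group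
  | mul g h hg hh =>
    rw [_root_.map_mul, hg, hh]
    group

end FGAux5

namespace FGAux6

open FreeGroup FGAux FGAux2 FGAux5

variable {n : ℕ}

local notation "F" => FreeGroup (Fin n)

lemma finite_ball (M : ℕ) : {g : F | g.norm ≤ M}.Finite := by
  have h1 : {g : F | g.norm ≤ M} =
      FreeGroup.toWord ⁻¹' {L : List (Fin n × Bool) | L.length ≤ M} := rfl
  rw [h1]
  exact Set.Finite.preimage (Set.injOn_of_injective FreeGroup.toWord_injective)
    (List.finite_length_le _ M)

lemma cyclen_one : cyclen (1 : F) = 0 := by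
  have h := cyclen_le_norm (1 : F)
  simpa using h

lemma exists_small_conj {g : F} {M : ℕ} (h : cyclen g ≤ M) :
    ∃ h' : F, h'.norm ≤ M ∧ IsConj g h' := by
  obtain ⟨x, hx⟩ := cyclen_exists g
  exact ⟨x * g * x⁻¹, by omega, isConj_iff.mpr ⟨x, rfl⟩⟩

end FGAux6

theorem finitely_many_outer_automorphisms_of_bounded_norm
    (n : ℕ) (hn : 1 ≤ n) (C : ℝ) :
    ∃ Φ : Finset (FreeGroup (Fin n) ≃* FreeGroup (Fin n)),
      ∀ φ : FreeGroup (Fin n) ≃* FreeGroup (Fin n),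
        (∀ g : FreeGroup (Fin n), g ≠ 1 → (cyclen (φ g) : ℝ) ≤ C * cyclen g) →
        ∃ ψ ∈ Φ, ∃ x : FreeGroup (Fin n),
          ∀ g : FreeGroup (Fin n), φ g = ψ (x * g * x⁻¹) := by
  classical
  set M : ℕ := ⌈C⌉₊ + ⌈2 * C⌉₊ with hM
  set Ball : Set (FreeGroup (Fin n)) := {g | g.norm ≤ M} with hBall
  have hBallFin : Ball.Finite := FGAux6.finite_ball M
  -- the conjugacy-class invariant, recorded as subsets of the finite ball
  let SubBall := {S : Set (FreeGroup (Fin n)) // S ⊆ Ball}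
  have : Finite SubBall := by
    have h1 : {T : Set (FreeGroup (Fin n)) | T ⊆ Ball}.Finite := hBallFin.finite_subsets
    exact h1.to_subtype
  let E := (Fin n → SubBall) × (Fin n → Fin n → SubBall)
  have hEfin : Finite E := by infer_instance
  let Inv : (FreeGroup (Fin n) ≃* FreeGroup (Fin n)) → E := fun φ =>
    (fun i => ⟨{h | h ∈ Ball ∧ IsConj (φ (FreeGroup.of i)) h}, fun h hh => hh.1⟩,
     fun i j => ⟨{h | h ∈ Ball ∧
        IsConj (φ (FreeGroup.of i * FreeGroup.of j)) h}, fun h hh => hh.1⟩)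
  letI : Fintype E := Fintype.ofFinite E
  let rep : E → (FreeGroup (Fin n) ≃* FreeGroup (Fin n)) := fun e =>
    if h : ∃ φ : FreeGroup (Fin n) ≃* FreeGroup (Fin n), Inv φ = e
    then h.choose else MulEquiv.refl _
  refine ⟨Finset.univ.image rep, ?_⟩
  intro φ hφ
  -- bounds on the cyclically reduced lengths of generator images
  have hgen : ∀ i : Fin n, cyclen (φ (FreeGroup.of i)) ≤ M := by
    intro i
    have h1 := hφ (FreeGroup.of i) (FreeGroup.of_ne_one i)
    rw [FGAux2.cyclen_of] at h1
    have h2 : (cyclen (φ (FreeGroup.of i)) : ℝ) ≤ (⌈C⌉₊ : ℝ) := by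
      calc (cyclen (φ (FreeGroup.of i)) : ℝ) ≤ C * 1 := by simpa using h1
      _ = C := by ring
      _ ≤ (⌈C⌉₊ : ℝ) := Nat.le_ceil C
    have h3 : cyclen (φ (FreeGroup.of i)) ≤ ⌈C⌉₊ := by exact_mod_cast h2
    omega
  have hpair : ∀ i j : Fin n,
      cyclen (φ (FreeGroup.of i * FreeGroup.of j)) ≤ M := by
    intro i j
    have hne1 : FreeGroup.of i * FreeGroup.of j ≠ 1 := by
      intro hcon
      have := FGAux2.cyclen_of_mul_of i j
      rw [hcon, FGAux6.cyclen_one] at this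
      omega
    have h1 := hφ (FreeGroup.of i * FreeGroup.of j) hne1
    rw [FGAux2.cyclen_of_mul_of] at h1
    have h2 : (cyclen (φ (FreeGroup.of i * FreeGroup.of j)) : ℝ) ≤ (⌈2 * C⌉₊ : ℝ) := by
      calc (cyclen (φ (FreeGroup.of i * FreeGroup.of j)) : ℝ) ≤ C * 2 := by simpa using h1
      _ = 2 * C := by ring
      _ ≤ (⌈2 * C⌉₊ : ℝ) := Nat.le_ceil _
    have h3 : cyclen (φ (FreeGroup.of i * FreeGroup.of j)) ≤ ⌈2 * C⌉₊ := by exact_mod_cast h2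
    omega
  -- pick the representative with the same invariant
  have hex : ∃ ψ : FreeGroup (Fin n) ≃* FreeGroup (Fin n), Inv ψ = Inv φ := ⟨φ, rfl⟩
  set ψ : FreeGroup (Fin n) ≃* FreeGroup (Fin n) := rep (Inv φ) with hψ
  have hψInv : Inv ψ = Inv φ := by
    rw [hψ]
    simp only [rep, dif_pos hex]
    exact hex.choose_spec
  have hψmem : ψ ∈ Finset.univ.image rep :=
    Finset.mem_image.mpr ⟨Inv φ, Finset.mem_univ _, rfl⟩
  -- the two automorphisms send each test element to conjugate elements
  have hconj1 : ∀ i : Fin n, IsConj (φ (FreeGroup.of i)) (ψ (FreeGroup.of i)) := by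
    intro i
    obtain ⟨h', hh1, hh2⟩ := FGAux6.exists_small_conj (hgen i)
    have hmem : h' ∈ ((Inv φ).1 i : Set (FreeGroup (Fin n))) := ⟨hh1, hh2⟩
    rw [← hψInv] at hmem
    exact hh2.trans (hmem.2.symm)
  have hconj2 : ∀ i j : Fin n, IsConj (φ (FreeGroup.of i * FreeGroup.of j))
      (ψ (FreeGroup.of i * FreeGroup.of j)) := by
    intro i j
    obtain ⟨h', hh1, hh2⟩ := FGAux6.exists_small_conj (hpair i j)
    have hmem : h' ∈ ((Inv φ).2 i j : Set (FreeGroup (Fin n))) := ⟨hh1, hh2⟩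
    rw [← hψInv] at hmem
    exact hh2.trans (hmem.2.symm)
  -- hence ψ⁻¹ ∘ φ preserves the conjugacy classes of the test elements
  set θ : FreeGroup (Fin n) ≃* FreeGroup (Fin n) := φ.trans ψ.symm with hθ
  have h1 : ∀ i : Fin n, IsConj (FreeGroup.of i) (θ (FreeGroup.of i)) := by
    intro i
    have := ψ.symm.toMonoidHom.map_isConj (hconj1 i)
    simp only [MulEquiv.coe_toMonoidHom] at this
    have h2 : ψ.symm (ψ (FreeGroup.of i)) = FreeGroup.of i := ψ.symm_apply_apply _
    rw [h2] at this
    exact this.symm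
  have h2 : ∀ i j : Fin n, IsConj (FreeGroup.of i * FreeGroup.of j)
      (θ (FreeGroup.of i * FreeGroup.of j)) := by
    intro i j
    have := ψ.symm.toMonoidHom.map_isConj (hconj2 i j)
    simp only [MulEquiv.coe_toMonoidHom] at this
    have h2' : ψ.symm (ψ (FreeGroup.of i * FreeGroup.of j))
        = FreeGroup.of i * FreeGroup.of j := ψ.symm_apply_apply _
    rw [h2'] at this
    exact this.symm
  obtain ⟨z, hz⟩ := FGAux5.inner_of_classes hn θ h1 h2
  refine ⟨ψ, hψmem, z, ?_⟩
  intro g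
  have := hz g
  rw [hθ] at this
  simp only [MulEquiv.trans_apply] at this
  calc φ g = ψ (ψ.symm (φ g)) := (ψ.apply_symm_apply _).symm
  _ = ψ (z * g * z⁻¹) := by rw [this]
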